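/- For a uniformly random permutation of {1,...,k}, the expected length of the longest increasing subsequence satisfies E(L_k) ≤ e√k for all k ≥ 1. -/

import Mathlib

open Finset

/-- Length of the longest increasing subsequence of a permutation of `Fin m`:
the largest cardinality of a set of positions on which the permutation is strictly
increasing. -/
noncomputable def lisLen {m : ℕ} (σ : Equiv.Perm (Fin m)) : ℕ :=
  sSup {c | ∃ s : Finset (Fin m), StrictMonoOn σ ↑s ∧ s.card = c}

/-- The wreath product permutation of `{0,...,nk-1}` built from `η ∈ S_n` and
`γ_1,...,γ_n ∈ S_k`: position `(i,j)` (i.e. `i*k + j`) is sent to `(η i, γ i j)`. -/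
def wreathPerm {n k : ℕ} (η : Equiv.Perm (Fin n)) (γ : Fin n → Equiv.Perm (Fin k)) :
    Equiv.Perm (Fin (n * k)) :=
  finProdFinEquiv.symm.trans ((Equiv.prodCongrRight γ).trans
    ((η.prodCongr (Equiv.refl (Fin k))).trans finProdFinEquiv))

/-- The block (of size `k`) containing a position. -/
def blockOf {n k : ℕ} (p : Fin (n * k)) : Fin n := (finProdFinEquiv.symm p).1

/-- The position within its block. -/
def posIn {n k : ℕ} (p : Fin (n * k)) : Fin k := (finProdFinEquiv.symm p).2

-- core counting: number of permutations strictly monotone on a fixed set s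
lemma countA0 {k : ℕ} (s : Finset (Fin k)) :
    (univ.filter fun σ : Equiv.Perm (Fin k) => StrictMonoOn σ ↑s).card
      ≤ k.descFactorial (k - s.card) := by
  classical
  have hcard : Fintype.card ((↥(sᶜ : Finset (Fin k))) ↪ Fin k)
      = k.descFactorial (k - s.card) := by
    rw [Fintype.card_embedding_eq]
    simp [Finset.card_compl]
  rw [← hcard]
  rw [← Finset.card_univ]
  apply Finset.card_le_card_of_injOn
    (fun σ => ⟨fun x => σ x.1, fun a b h => Subtype.ext (σ.injective h)⟩)
    (fun _ _ => Finset.mem_univ _)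
  intro σ hσ τ hτ h
  simp only [Finset.mem_coe, Finset.mem_filter] at hσ hτ
  have hcompl : ∀ x : Fin k, x ∉ s → σ x = τ x := by
    intro x hx
    have := DFunLike.congr_fun h ⟨x, by simpa using hx⟩
    exact this
  -- images of s agree
  have himage : s.image σ = s.image τ := by
    have hc : (sᶜ).image σ = (sᶜ).image τ :=
      Finset.image_congr (fun x hx => hcompl x (by simpa using hx))
    have h1 : ∀ (ρ : Equiv.Perm (Fin k)), s.image ρ = ((sᶜ).image ρ)ᶜ := by
      intro ρ
      ext y
      simp only [Finset.mem_image, Finset.mem_compl]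
      constructor
      · rintro ⟨x, hx, rfl⟩ ⟨z, hz, hzy⟩
        exact hz (by rw [ρ.injective hzy]; exact hx)
      · intro hy
        refine ⟨ρ.symm y, ?_, by simp⟩
        by_contra hxs
        exact hy ⟨ρ.symm y, hxs, by simp⟩
    rw [h1, h1, hc]
  -- strict mono extensions agree on s
  have key : ∀ x ∈ s, σ x = τ x := by
    intro x hx
    set n := s.card with hn
    have himσ : (s.image σ).card = n := by
      rw [Finset.card_image_of_injective _ σ.injective]
    have himτ : (s.image τ).card = n := by
      rw [Finset.card_image_of_injective _ τ.injective]
    have hfσ : (fun i : Fin n => σ (s.orderEmbOfFin rfl i))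
        = (s.image σ).orderEmbOfFin himσ := by
      apply Finset.orderEmbOfFin_unique
      · intro i; exact Finset.mem_image_of_mem _ (Finset.orderEmbOfFin_mem _ _ _)
      · intro a b hab
        exact hσ.2 (Finset.orderEmbOfFin_mem _ _ _) (Finset.orderEmbOfFin_mem _ _ _)
          ((s.orderEmbOfFin rfl).strictMono hab)
    have hfτ : (fun i : Fin n => τ (s.orderEmbOfFin rfl i))
        = (s.image σ).orderEmbOfFin himσ := by
      apply Finset.orderEmbOfFin_unique
      · intro i
        rw [himage]
        exact Finset.mem_image_of_mem _ (Finset.orderEmbOfFin_mem _ _ _)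
      · intro a b hab
        exact hτ.2 (Finset.orderEmbOfFin_mem _ _ _) (Finset.orderEmbOfFin_mem _ _ _)
          ((s.orderEmbOfFin rfl).strictMono hab)
    obtain ⟨i, hi⟩ : ∃ i, s.orderEmbOfFin rfl i = x := by
      have : x ∈ Set.range (s.orderEmbOfFin (rfl : s.card = n)) := by
        rw [Finset.range_orderEmbOfFin]; exact hx
      exact this
    rw [← hi]
    exact (congrFun hfσ i).trans (congrFun hfτ i).symm
  apply Equiv.ext
  intro x
  by_cases hx : x ∈ s
  · exact key x hx
  · exact hcompl x hx

lemma lisLen_set_nonempty {k : ℕ} (σ : Equiv.Perm (Fin k)) :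
    {c | ∃ s : Finset (Fin k), StrictMonoOn σ ↑s ∧ s.card = c}.Nonempty :=
  ⟨0, ∅, by simp [StrictMonoOn], rfl⟩

lemma lisLen_set_bdd {k : ℕ} (σ : Equiv.Perm (Fin k)) :
    BddAbove {c | ∃ s : Finset (Fin k), StrictMonoOn σ ↑s ∧ s.card = c} := by
  refine ⟨k, fun c hc => ?_⟩
  obtain ⟨s, -, rfl⟩ := hc
  simpa using Finset.card_le_univ s

lemma lisLen_le {k : ℕ} (σ : Equiv.Perm (Fin k)) : lisLen σ ≤ k := by
  apply csSup_le (lisLen_set_nonempty σ)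
  rintro c ⟨s, -, rfl⟩
  simpa using Finset.card_le_univ s

lemma exists_of_le_lisLen {k : ℕ} (σ : Equiv.Perm (Fin k)) {j : ℕ} (hj : j ≤ lisLen σ) :
    ∃ s : Finset (Fin k), s.card = j ∧ StrictMonoOn σ ↑s := by
  have hmem := Nat.sSup_mem (lisLen_set_nonempty σ) (lisLen_set_bdd σ)
  obtain ⟨s, hs, hcard⟩ := hmem
  have hj' : j ≤ s.card := by unfold lisLen at hj; omega
  obtain ⟨t, hts, htcard⟩ := Finset.exists_subset_card_eq hj'
  exact ⟨t, htcard, hs.mono (by exact_mod_cast hts)⟩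

def Aset {k : ℕ} (s : Finset (Fin k)) : Finset (Equiv.Perm (Fin k)) :=
  univ.filter fun σ => StrictMonoOn σ (↑s : Set (Fin k))

noncomputable def Nset (k j : ℕ) : Finset (Equiv.Perm (Fin k)) :=
  univ.filter fun σ => j ≤ lisLen σ

lemma countA {k : ℕ} (s : Finset (Fin k)) :
    (Aset s).card ≤ k.descFactorial (k - s.card) := countA0 s

lemma countN {k j : ℕ} (hjk : j ≤ k) :
    (Nset k j).card * j.factorial
      ≤ k.choose j * k.factorial := by
  classical
  have hsub : Nset k j
      ⊆ (Finset.powersetCard j univ).biUnion (fun s : Finset (Fin k) => Aset s) := by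
    intro σ hσ
    rw [Nset, Finset.mem_filter] at hσ
    obtain ⟨s, hcard, hmono⟩ := exists_of_le_lisLen σ hσ.2
    refine Finset.mem_biUnion.2 ⟨s, Finset.mem_powersetCard.2 ⟨Finset.subset_univ _, hcard⟩, ?_⟩
    rw [Aset, Finset.mem_filter]
    exact ⟨Finset.mem_univ _, hmono⟩
  have h1 : (Nset k j).card
      ≤ k.choose j * k.descFactorial (k - j) := by
    calc _ ≤ (((Finset.powersetCard j univ).biUnion (fun s : Finset (Fin k) => Aset s))).card :=
          Finset.card_le_card hsub
      _ ≤ ∑ s ∈ Finset.powersetCard j (univ : Finset (Fin k)), (Aset s).card :=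
          Finset.card_biUnion_le
      _ ≤ ∑ s ∈ Finset.powersetCard j (univ : Finset (Fin k)), k.descFactorial (k - j) := by
          apply Finset.sum_le_sum
          intro s hs
          have := countA s
          rwa [(Finset.mem_powersetCard.1 hs).2] at this
      _ = k.choose j * k.descFactorial (k - j) := by
          rw [Finset.sum_const, smul_eq_mul, Finset.card_powersetCard, Finset.card_univ,
            Fintype.card_fin]
  calc (Nset k j).card * j.factorial
      ≤ (k.choose j * k.descFactorial (k - j)) * j.factorial :=
        Nat.mul_le_mul_right _ h1
    _ = k.choose j * (j.factorial * k.descFactorial (k - j)) := by ring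
    _ = k.choose j * k.factorial := by
        have h2 := Nat.factorial_mul_descFactorial (Nat.sub_le k j)
        rw [Nat.sub_sub_self hjk] at h2
        rw [h2]

-- expectation decomposition
lemma sumL {k : ℕ} :
    ∑ σ : Equiv.Perm (Fin k), lisLen σ
      = ∑ j ∈ Finset.Icc 1 k, (Nset k j).card := by
  classical
  have h1 : ∀ σ : Equiv.Perm (Fin k), lisLen σ = ∑ j ∈ Finset.Icc 1 k,
      (if j ≤ lisLen σ then 1 else 0) := by
    intro σ
    have hfil : (Finset.Icc 1 k).filter (fun j => j ≤ lisLen σ) = Finset.Icc 1 (lisLen σ) := by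
      ext j
      simp only [Finset.mem_filter, Finset.mem_Icc]
      constructor
      · rintro ⟨⟨h1, -⟩, h3⟩; exact ⟨h1, h3⟩
      · rintro ⟨h1, h2⟩; exact ⟨⟨h1, h2.trans (lisLen_le σ)⟩, h2⟩
    rw [← Finset.sum_filter, hfil, Finset.sum_const, smul_eq_mul, mul_one, Nat.card_Icc]
    omega
  rw [Finset.sum_congr rfl (fun σ _ => h1 σ), Finset.sum_comm]
  apply Finset.sum_congr rfl
  intro j _
  rw [Nset, Finset.card_filter]

-- (1+1/j)^j ≤ e, packaged
lemma pow_succ_le_exp_mul (j : ℕ) (hj : 1 ≤ j) :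
    ((j : ℝ) + 1) ^ j ≤ Real.exp 1 * (j : ℝ) ^ j := by
  have hjr : (0:ℝ) < j := by exact_mod_cast hj
  have h1 : (1:ℝ) + 1/(j:ℝ) ≤ Real.exp (1/(j:ℝ)) := by
    have := Real.add_one_le_exp (1/(j:ℝ)); linarith
  have h2 : ((1:ℝ) + 1/(j:ℝ)) ^ j ≤ Real.exp (1/(j:ℝ)) ^ j :=
    pow_le_pow_left₀ (by positivity) h1 j
  have h3 : Real.exp (1/(j:ℝ)) ^ j = Real.exp 1 := by
    rw [← Real.exp_nat_mul]
    congr 1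
    field_simp
  have h4 : ((1:ℝ) + 1/(j:ℝ)) * (j:ℝ) = (j:ℝ) + 1 := by field_simp
  calc ((j : ℝ) + 1) ^ j = (((1:ℝ) + 1/(j:ℝ)) * (j:ℝ)) ^ j := by rw [h4]
    _ = ((1:ℝ) + 1/(j:ℝ)) ^ j * (j:ℝ) ^ j := mul_pow _ _ _
    _ ≤ Real.exp 1 * (j:ℝ) ^ j := by
        rw [← h3]
        exact mul_le_mul_of_nonneg_right h2 (by positivity)

-- j! ≥ 3 (j/e)^j for j ≥ 8
lemma factorial_lb : ∀ j : ℕ, 8 ≤ j → 3 * (j:ℝ)^j ≤ (j.factorial : ℝ) * Real.exp 1 ^ j := by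
  intro j hj
  induction j, hj using Nat.le_induction with
  | base =>
      have he : (2.7:ℝ) ≤ Real.exp 1 := le_of_lt (lt_trans (by norm_num) Real.exp_one_gt_d9)
      have h8 : (2.7:ℝ)^8 ≤ Real.exp 1 ^ 8 := pow_le_pow_left₀ (by norm_num) he 8
      have : ((8:ℕ).factorial : ℝ) = 40320 := by norm_num [Nat.factorial]
      rw [this]
      calc 3 * ((8:ℕ):ℝ)^8 ≤ (40320:ℝ) * 2.7^8 := by norm_num
        _ ≤ 40320 * Real.exp 1 ^ 8 := by nlinarith [h8]
  | succ j hj8 ih =>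
      have hpow := pow_succ_le_exp_mul j (by omega)
      have hE : (0:ℝ) < Real.exp 1 := Real.exp_pos 1
      have hj1 : (0:ℝ) < (j:ℝ) + 1 := by positivity
      have hfac : ((j+1).factorial : ℝ) = ((j:ℝ)+1) * (j.factorial : ℝ) := by
        push_cast [Nat.factorial_succ]; ring
      have : 3 * (((j:ℕ):ℝ) + 1) ^ (j+1) ≤ ((j:ℝ)+1) * (j.factorial : ℝ) * Real.exp 1 ^ (j+1) := by
        have step1 : 3 * (((j:ℕ):ℝ) + 1) ^ (j+1)
            = ((j:ℝ)+1) * (3 * ((j:ℝ)+1)^j) := by ring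
        rw [step1, pow_succ]
        calc ((j:ℝ)+1) * (3 * ((j:ℝ)+1)^j)
            ≤ ((j:ℝ)+1) * (3 * (Real.exp 1 * (j:ℝ)^j)) := by
              apply mul_le_mul_of_nonneg_left _ (le_of_lt hj1)
              apply mul_le_mul_of_nonneg_left hpow (by norm_num)
          _ = ((j:ℝ)+1) * Real.exp 1 * (3 * (j:ℝ)^j) := by ring
          _ ≤ ((j:ℝ)+1) * Real.exp 1 * ((j.factorial : ℝ) * Real.exp 1 ^ j) := by
              apply mul_le_mul_of_nonneg_left ih (by positivity)
          _ = ((j:ℝ)+1) * (j.factorial : ℝ) * (Real.exp 1 ^ j * Real.exp 1) := by ring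
      rw [hfac]
      push_cast at this ⊢
      linarith

noncomputable def bfun (k j : ℕ) : ℝ := (Real.exp 1 ^ 2 * (k:ℝ) / ((j:ℝ))^2) ^ j

lemma claim1 (k M : ℕ) (hup : Real.exp 1 * Real.sqrt k ≤ (M:ℝ) + 3/2) :
    bfun k (M+1) ≤ Real.exp 1 := by
  set E1 := Real.exp 1 with hE1
  set m : ℝ := (M:ℝ) + 1 with hm
  have hm0 : (0:ℝ) < m := by positivity
  have hK : E1 ^ 2 * (k:ℝ) = (E1 * Real.sqrt k)^2 := by
    rw [mul_pow, Real.sq_sqrt (by positivity : (0:ℝ) ≤ (k:ℝ))]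
  have hsknn : (0:ℝ) ≤ E1 * Real.sqrt k := by positivity
  have hbase : E1 ^ 2 * (k:ℝ) / m^2 ≤ ((m + 1/2)/m)^2 := by
    rw [hK, div_pow]
    apply div_le_div_of_nonneg_right _ (by positivity)
    · apply pow_le_pow_left₀ hsknn
      calc E1 * Real.sqrt k ≤ (M:ℝ) + 3/2 := hup
        _ = m + 1/2 := by rw [hm]; ring
  have hcast : ((M+1 : ℕ):ℝ) = m := by push_cast [hm]; ring
  calc bfun k (M+1) = (E1 ^ 2 * (k:ℝ) / m^2) ^ (M+1) := by rw [bfun, hcast]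
    _ ≤ (((m + 1/2)/m)^2) ^ (M+1) := by
        apply pow_le_pow_left₀ (by positivity) hbase
    _ = ((m + 1/2)/m) ^ (2*(M+1)) := (pow_mul _ 2 _).symm
    _ = (1 + 1/(2*m)) ^ (2*(M+1)) := by
        congr 1
        field_simp
    _ ≤ Real.exp (1/(2*m)) ^ (2*(M+1)) := by
        apply pow_le_pow_left₀ (by positivity)
        have := Real.add_one_le_exp (1/(2*m)); linarith
    _ = E1 := by
        rw [hE1, ← Real.exp_nat_mul]
        congr 1
        push_cast [hm]
        field_simp

lemma claim2 (k j : ℕ) (h8 : 8 ≤ j) (hup : Real.exp 1 * Real.sqrt k ≤ (j:ℝ) + 1/2) :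
    bfun k (j+1) ≤ bfun k j * (1/3) := by
  set E1 := Real.exp 1 with hE1
  have hE0 : (0:ℝ) < E1 := Real.exp_pos 1
  have hjr : (8:ℝ) ≤ (j:ℝ) := by exact_mod_cast h8
  have hjr0 : (0:ℝ) < (j:ℝ) := by linarith
  have hK : E1 ^ 2 * (k:ℝ) = (E1 * Real.sqrt k)^2 := by
    rw [mul_pow, Real.sq_sqrt (by positivity : (0:ℝ) ≤ (k:ℝ))]
  have hsknn : (0:ℝ) ≤ E1 * Real.sqrt k := by positivity
  have hA : E1 ^ 2 * (k:ℝ) ≤ ((j:ℝ)+1)^2 := by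
    rw [hK]
    apply pow_le_pow_left₀ hsknn
    linarith
  have hcast : ((j+1 : ℕ):ℝ) = (j:ℝ) + 1 := by push_cast; ring
  have hsplit : E1 ^ 2 * (k:ℝ) / ((j:ℝ)+1)^2
      = (E1 ^ 2 * (k:ℝ) / (j:ℝ)^2) * ((j:ℝ)^2/((j:ℝ)+1)^2) := by
    field_simp
  have hbern : (3:ℝ) ≤ (((j:ℝ)+1)^2/(j:ℝ)^2)^j := by
    have ha : ((j:ℝ)+1)^2/(j:ℝ)^2 = 1 + (2/(j:ℝ) + 1/(j:ℝ)^2) := by field_simp; ring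
    have hb := one_add_mul_le_pow (a := 2/(j:ℝ) + 1/(j:ℝ)^2) (le_trans (by norm_num : (-2:ℝ) ≤ 0) (by positivity)) j
    have hc : (2:ℝ) ≤ (j:ℝ) * (2/(j:ℝ)) := by field_simp; norm_num
    have hd : (0:ℝ) ≤ (j:ℝ) * (1/(j:ℝ)^2) := by positivity
    rw [ha]
    nlinarith [hb]
  have hinv : ((j:ℝ)^2/((j:ℝ)+1)^2)^j ≤ 1/3 := by
    have hpos : (0:ℝ) < (((j:ℝ)+1)^2/(j:ℝ)^2)^j := by positivity
    have heq : ((j:ℝ)^2/((j:ℝ)+1)^2)^j = ((((j:ℝ)+1)^2/(j:ℝ)^2)^j)⁻¹ := by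
      rw [← inv_pow]
      congr 1
      rw [inv_div]
    rw [heq]
    rw [inv_le_comm₀ hpos (by norm_num)]
    calc (1/3 : ℝ)⁻¹ = 3 := by norm_num
      _ ≤ _ := hbern
  have hb0 : (0:ℝ) ≤ E1 ^ 2 * (k:ℝ) / (j:ℝ)^2 := by positivity
  calc bfun k (j+1) = (E1 ^ 2 * (k:ℝ) / ((j:ℝ)+1)^2) ^ (j+1) := by rw [bfun, hcast]
    _ = (E1 ^ 2 * (k:ℝ) / ((j:ℝ)+1)^2) ^ j * (E1 ^ 2 * (k:ℝ) / ((j:ℝ)+1)^2) := pow_succ _ _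
    _ ≤ (E1 ^ 2 * (k:ℝ) / ((j:ℝ)+1)^2) ^ j * 1 := by
        apply mul_le_mul_of_nonneg_left _ (by positivity)
        rw [div_le_one (by positivity)]
        exact hA
    _ = ((E1 ^ 2 * (k:ℝ) / (j:ℝ)^2) * ((j:ℝ)^2/((j:ℝ)+1)^2)) ^ j := by rw [mul_one, hsplit]
    _ = (E1 ^ 2 * (k:ℝ) / (j:ℝ)^2) ^ j * ((j:ℝ)^2/((j:ℝ)+1)^2) ^ j := mul_pow _ _ _
    _ ≤ (E1 ^ 2 * (k:ℝ) / (j:ℝ)^2) ^ j * (1/3) :=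
        mul_le_mul_of_nonneg_left hinv (by positivity)
    _ = bfun k j * (1/3) := by rw [bfun]

lemma claim3 (k M : ℕ) (hM : 7 ≤ M) (hup : Real.exp 1 * Real.sqrt k ≤ (M:ℝ) + 3/2) :
    ∀ i : ℕ, bfun k (M+1+i) ≤ Real.exp 1 * (1/3)^i := by
  intro i
  induction i with
  | zero => simpa using claim1 k M hup
  | succ i ih =>
      have h8 : 8 ≤ M + 1 + i := by omega
      have hup' : Real.exp 1 * Real.sqrt k ≤ ((M+1+i : ℕ):ℝ) + 1/2 := by
        push_cast
        calc Real.exp 1 * Real.sqrt k ≤ (M:ℝ) + 3/2 := hup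
          _ ≤ (M:ℝ) + 1 + i + 1/2 := by
              have h0 : (0:ℝ) ≤ (i:ℝ) := Nat.cast_nonneg i
              linarith
      have := claim2 k (M+1+i) h8 hup'
      have heq : M+1+(i+1) = (M+1+i)+1 := by omega
      rw [heq]
      calc bfun k ((M+1+i)+1) ≤ bfun k (M+1+i) * (1/3) := this
        _ ≤ (Real.exp 1 * (1/3)^i) * (1/3) := mul_le_mul_of_nonneg_right ih (by norm_num)
        _ = Real.exp 1 * (1/3)^(i+1) := by ring

lemma tail_sum (k M : ℕ) (hM : 7 ≤ M) (hup : Real.exp 1 * Real.sqrt k ≤ (M:ℝ) + 3/2) :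
    ∑ j ∈ Finset.Ioc M k, bfun k j ≤ (3/2) * Real.exp 1 := by
  have h1 : Finset.Ioc M k = Finset.Ico (M+1) (k+1) := by
    rw [Finset.Ico_add_one_right_eq_Icc, Finset.Icc_add_one_left_eq_Ioc]
  rw [h1, Finset.sum_Ico_eq_sum_range]
  have h2 : ∀ i ∈ Finset.range (k+1-(M+1)), bfun k (M+1+i) ≤ Real.exp 1 * (1/3)^i :=
    fun i _ => claim3 k M hM hup i
  calc ∑ i ∈ Finset.range (k+1-(M+1)), bfun k (M+1+i)
      ≤ ∑ i ∈ Finset.range (k+1-(M+1)), Real.exp 1 * (1/3)^i := Finset.sum_le_sum h2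
    _ = Real.exp 1 * ∑ i ∈ Finset.range (k+1-(M+1)), (1/3:ℝ)^i := by
        rw [Finset.mul_sum]
    _ ≤ (3/2) * Real.exp 1 := by
        have hg := geom_sum_eq (show (1/3:ℝ) ≠ 1 by norm_num) (k+1-(M+1))
        rw [hg]
        have hp : (0:ℝ) ≤ (1/3:ℝ)^(k+1-(M+1)) := by positivity
        have hE0 : (0:ℝ) < Real.exp 1 := Real.exp_pos 1
        have : ((1/3:ℝ)^(k+1-(M+1)) - 1)/((1/3:ℝ) - 1) = (1 - (1/3:ℝ)^(k+1-(M+1))) * (3/2) := by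
          ring
        rw [this]
        nlinarith

lemma countN' {k j : ℕ} (hjk : j ≤ k) (c : ℕ)
    (hc : c * j.factorial ≤ k.choose j * k.factorial) (h8 : 8 ≤ j) :
    (c : ℝ) ≤ (k.factorial : ℝ) * bfun k j / 9 := by
  set E1 := Real.exp 1 with hE1
  have hE0 : (0:ℝ) < E1 := Real.exp_pos 1
  have hjr0 : (0:ℝ) < (j:ℝ) := by
    have : (8:ℝ) ≤ (j:ℝ) := by exact_mod_cast h8
    linarith
  have hF0 : (0:ℝ) < (j.factorial : ℝ) := by exact_mod_cast j.factorial_pos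
  have hkf0 : (0:ℝ) < (k.factorial : ℝ) := by exact_mod_cast k.factorial_pos
  set F := (j.factorial : ℝ) with hF
  set jp := (j:ℝ)^j with hjp
  have hjp0 : (0:ℝ) < jp := by positivity
  have h1 : (c:ℝ) * F ≤ (k.choose j : ℝ) * (k.factorial : ℝ) := by
    rw [hF]
    exact_mod_cast hc
  have h2 : (k.choose j : ℝ) ≤ (k:ℝ)^j / F := Nat.choose_le_pow_div j k
  have h3 : 3 * jp ≤ F * E1^j := factorial_lb j h8
  have hbfun : bfun k j = (E1^j)^2 * ((k:ℝ))^j / (jp^2) := by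
    rw [bfun, div_pow, mul_pow, hjp, ← pow_mul, ← pow_mul, ← pow_mul, ← pow_mul,
      mul_comm j 2]
  -- c ≤ k! * k^j / F^2
  have h4 : (c:ℝ) ≤ (k.factorial : ℝ) * ((k:ℝ)^j / F^2) := by
    rw [le_div_iff₀ hF0] at h2
    calc (c:ℝ) = (c:ℝ) * F / F := by field_simp
      _ ≤ (k.choose j : ℝ) * (k.factorial : ℝ) / F := by
          apply div_le_div_of_nonneg_right h1 (by positivity)
      _ = (k.choose j : ℝ) * F * (k.factorial : ℝ) / F^2 := by
          field_simp
      _ ≤ (k:ℝ)^j * (k.factorial : ℝ) / F^2 := by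
          apply div_le_div_of_nonneg_right _ (by positivity)
          exact mul_le_mul_of_nonneg_right h2 hkf0.le
      _ = (k.factorial : ℝ) * ((k:ℝ)^j / F^2) := by ring
  have h5 : (k:ℝ)^j / F^2 ≤ bfun k j / 9 := by
    have h6 : 9 * jp^2 ≤ (F * E1^j)^2 := by nlinarith [h3, hjp0]
    have h7 : (0:ℝ) ≤ (k:ℝ)^j := by positivity
    have h8' := mul_le_mul_of_nonneg_left h6 h7
    rw [hbfun, div_div, div_le_div_iff₀ (by positivity) (by positivity)]
    nlinarith [h8']
  calc (c:ℝ) ≤ (k.factorial : ℝ) * ((k:ℝ)^j / F^2) := h4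
    _ ≤ (k.factorial : ℝ) * (bfun k j / 9) := mul_le_mul_of_nonneg_left h5 hkf0.le
    _ = (k.factorial : ℝ) * bfun k j / 9 := by ring

/-- The expected LIS length of a uniformly random permutation of `{1,...,k}` is at
most `e√k` for all `k ≥ 1`. -/
theorem stmt8 (k : ℕ) (hk : 1 ≤ k) :
    (∑ σ : Equiv.Perm (Fin k), (lisLen σ : ℝ)) / (Nat.factorial k)
      ≤ Real.exp 1 * Real.sqrt k := by
  have hkf0 : (0:ℝ) < (Nat.factorial k : ℝ) := by exact_mod_cast k.factorial_pos
  have hk0 : (0:ℝ) ≤ (k:ℝ) := Nat.cast_nonneg k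
  have he27 : (2.7:ℝ) ≤ Real.exp 1 := le_of_lt (lt_trans (by norm_num) Real.exp_one_gt_d9)
  have he28 : Real.exp 1 ≤ 2.8 := le_of_lt (lt_trans Real.exp_one_lt_d9 (by norm_num))
  have hsk0 : (0:ℝ) ≤ Real.sqrt k := Real.sqrt_nonneg _
  have hsq : Real.sqrt k * Real.sqrt k = (k:ℝ) := Real.mul_self_sqrt hk0
  rw [div_le_iff₀ hkf0]
  have hsum : (∑ σ : Equiv.Perm (Fin k), (lisLen σ:ℝ))
      = ∑ j ∈ Finset.Icc 1 k, ((Nset k j).card : ℝ) := by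
    have h := congrArg (fun n : ℕ => (n:ℝ)) (sumL (k := k))
    push_cast at h
    exact h
  rcases le_or_gt k 7 with hk7 | hk8
  · -- small case: E ≤ k ≤ e√k
    have h1 : (∑ σ : Equiv.Perm (Fin k), (lisLen σ:ℝ)) ≤ (k:ℝ) * (Nat.factorial k : ℝ) := by
      calc (∑ σ : Equiv.Perm (Fin k), (lisLen σ:ℝ))
          ≤ ∑ _σ : Equiv.Perm (Fin k), (k:ℝ) :=
            Finset.sum_le_sum (fun σ _ => by exact_mod_cast lisLen_le σ)
        _ = (Fintype.card (Equiv.Perm (Fin k)) : ℝ) * k := by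
            rw [Finset.sum_const, Finset.card_univ]
            push_cast
            ring
        _ = (k:ℝ) * (Nat.factorial k : ℝ) := by
            rw [Fintype.card_perm, Fintype.card_fin]
            ring
    refine h1.trans ?_
    apply mul_le_mul_of_nonneg_right _ hkf0.le
    have hskle : Real.sqrt k ≤ 2.7 := by
      rw [Real.sqrt_le_left (by norm_num)]
      have : (k:ℝ) ≤ 7 := by exact_mod_cast hk7
      nlinarith
    calc (k:ℝ) = Real.sqrt k * Real.sqrt k := hsq.symm
      _ ≤ Real.exp 1 * Real.sqrt k :=
          mul_le_mul_of_nonneg_right (hskle.trans he27) hsk0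
  · -- big case: k ≥ 8
    have hsk28 : (2.8:ℝ) ≤ Real.sqrt k := by
      rw [Real.le_sqrt (by norm_num) hk0]
      have : (8:ℝ) ≤ (k:ℝ) := by exact_mod_cast hk8
      nlinarith
    have ht0 : (7:ℝ) ≤ Real.exp 1 * Real.sqrt k - 1/2 := by nlinarith
    set M : ℕ := ⌊Real.exp 1 * Real.sqrt k - 1/2⌋₊ with hMdef
    have hMle : (M:ℝ) ≤ Real.exp 1 * Real.sqrt k - 1/2 := Nat.floor_le (by linarith)
    have hMgt : Real.exp 1 * Real.sqrt k - 1/2 < (M:ℝ) + 1 := Nat.lt_floor_add_one _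
    have hM7 : 7 ≤ M := Nat.le_floor (by push_cast; linarith)
    have hMk : M ≤ k := by
      have h1 : (M:ℝ) ≤ (k:ℝ) := by nlinarith
      exact_mod_cast h1
    have hup : Real.exp 1 * Real.sqrt k ≤ (M:ℝ) + 3/2 := by linarith
    rw [hsum]
    have hicc : Finset.Icc 1 k = Finset.Ioc 0 k := Finset.Icc_add_one_left_eq_Ioc 0 k
    rw [hicc, ← Finset.sum_Ioc_consecutive (fun j => ((Nset k j).card : ℝ))
      (Nat.zero_le M) hMk]
    have hhead : ∑ j ∈ Finset.Ioc 0 M, ((Nset k j).card : ℝ)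
        ≤ (M:ℝ) * (Nat.factorial k : ℝ) := by
      calc ∑ j ∈ Finset.Ioc 0 M, ((Nset k j).card:ℝ)
          ≤ ∑ _j ∈ Finset.Ioc 0 M, (Nat.factorial k : ℝ) := by
            apply Finset.sum_le_sum
            intro j _
            have h1 : (Nset k j).card ≤ Fintype.card (Equiv.Perm (Fin k)) := by
              rw [Nset]
              exact (Finset.card_filter_le _ _).trans (le_of_eq Finset.card_univ)
            rw [Fintype.card_perm, Fintype.card_fin] at h1
            exact_mod_cast h1
        _ = (M:ℝ) * (Nat.factorial k : ℝ) := by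
            rw [Finset.sum_const, Nat.card_Ioc, Nat.sub_zero]
            push_cast
            ring
    have htail : ∑ j ∈ Finset.Ioc M k, ((Nset k j).card : ℝ)
        ≤ (1/2) * (Nat.factorial k : ℝ) := by
      calc ∑ j ∈ Finset.Ioc M k, ((Nset k j).card : ℝ)
          ≤ ∑ j ∈ Finset.Ioc M k, (Nat.factorial k : ℝ) * bfun k j / 9 := by
            apply Finset.sum_le_sum
            intro j hj
            rw [Finset.mem_Ioc] at hj
            exact countN' hj.2 _ (countN hj.2) (by omega)
        _ = (Nat.factorial k : ℝ)/9 * ∑ j ∈ Finset.Ioc M k, bfun k j := by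
            rw [Finset.mul_sum]
            apply Finset.sum_congr rfl
            intro j _
            ring
        _ ≤ (Nat.factorial k : ℝ)/9 * ((3/2) * Real.exp 1) :=
            mul_le_mul_of_nonneg_left (tail_sum k M hM7 hup) (by positivity)
        _ ≤ (1/2) * (Nat.factorial k : ℝ) := by nlinarith
    have hfinal := add_le_add hhead htail
    have hmul := mul_le_mul_of_nonneg_right
      (show (M:ℝ) + 1/2 ≤ Real.exp 1 * Real.sqrt k by linarith) hkf0.le
    calc (∑ j ∈ Finset.Ioc 0 M, ((Nset k j).card : ℝ))
          + ∑ j ∈ Finset.Ioc M k, ((Nset k j).card : ℝ)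
        ≤ (M:ℝ) * (Nat.factorial k : ℝ) + (1/2) * (Nat.factorial k : ℝ) := hfinal
      _ = ((M:ℝ) + 1/2) * (Nat.factorial k : ℝ) := by ring
      _ ≤ Real.exp 1 * Real.sqrt k * (Nat.factorial k : ℝ) := hmul
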